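/- The positive cone P_k ⊆ (Σ_k^±)*, consisting of all reduced words u with w(u) > 0, is a context-free language over the alphabet Σ_k^± = {s_1,…,s_k, S_1,…,S_k}. -/

import Mathlib

/-- A letter of the alphabet `Σ_k^±`: `(i, true)` is the positive letter `s_{i+1}`,
`(i, false)` is the negative letter `S_{i+1} = s_{i+1}⁻¹`. -/
abbrev Letter (k : ℕ) := Fin k × Bool

/-- A word is reduced if no two adjacent letters cancel. -/
def Reduced {k : ℕ} (u : List (Letter k)) : Prop :=
  u.Chain' fun x y => y ≠ (x.1, !x.2)

/-- Contribution of a length-2 factor `xy`: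
`+1` if it has the form `s_j S_i` with `j > i`, `-1` if `S_j s_i` with `j > i`, else `0`. -/
def pairVal {k : ℕ} (x y : Letter k) : ℤ :=
  if x.2 = true ∧ y.2 = false ∧ y.1 < x.1 then 1
  else if x.2 = false ∧ y.2 = true ∧ y.1 < x.1 then -1
  else 0

/-- Sum of contributions of all length-2 factors of a word. -/
def pairSum {k : ℕ} : List (Letter k) → ℤ
  | x :: y :: t => pairVal x y + pairSum (y :: t)
  | _ => 0

/-- `+1/2`, `-1/2`, or `0` according to the last letter. -/
def lastSign {k : ℕ} (u : List (Letter k)) : ℚ :=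
  match u.getLast? with
  | none => 0
  | some x => if x.2 then 1/2 else -1/2

/-- The weight function `w` of Šunić's order. -/
def w {k : ℕ} (u : List (Letter k)) : ℚ := pairSum u + lastSign u

namespace CFproof

variable {k : ℕ}

lemma pairVal_cases (x y : Letter k) : pairVal x y = 1 ∨ pairVal x y = 0 ∨ pairVal x y = -1 := by
  unfold pairVal; split_ifs <;> simp

lemma pairVal_eq_one_iff {x y : Letter k} :
    pairVal x y = 1 ↔ x.2 = true ∧ y.2 = false ∧ y.1 < x.1 := by
  unfold pairVal; split_ifs with h1 h2 <;> simp_all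

lemma pairVal_eq_neg_one_iff {x y : Letter k} :
    pairVal x y = -1 ↔ x.2 = false ∧ y.2 = true ∧ y.1 < x.1 := by
  unfold pairVal; split_ifs with h1 h2 <;> simp_all

lemma ne_flip_of_pairVal_ne_zero {x y : Letter k} (h : pairVal x y ≠ 0) :
    y ≠ (x.1, !x.2) := by
  unfold pairVal at h
  split_ifs at h with h1 h2
  · rintro rfl; exact absurd h1.2.2 (by simp)
  · rintro rfl; exact absurd h2.2.2 (by simp)
  · exact absurd rfl h

@[simp] lemma pairSum_nil : pairSum ([] : List (Letter k)) = 0 := rfl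
@[simp] lemma pairSum_singleton (a : Letter k) : pairSum [a] = 0 := rfl

lemma pairSum_cons {u : List (Letter k)} {y : Letter k} (x : Letter k)
    (hy : u.head? = some y) : pairSum (x :: u) = pairVal x y + pairSum u := by
  cases u with
  | nil => simp at hy
  | cons a t => simp only [List.head?_cons, Option.some.injEq] at hy; subst hy; rfl

lemma pairSum_append {u v : List (Letter k)} {x y : Letter k}
    (hx : u.getLast? = some x) (hy : v.head? = some y) :
    pairSum (u ++ v) = pairSum u + pairVal x y + pairSum v := by
  induction u with
  | nil => simp at hx
  | cons a t ih =>
    cases t with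
    | nil =>
      simp only [List.getLast?_singleton, Option.some.injEq] at hx; subst hx
      rw [List.singleton_append, pairSum_cons a hy, pairSum_singleton]; ring
    | cons b s =>
      have ht : (b :: s : List (Letter k)) ≠ [] := by simp
      have hx' : (b :: s).getLast? = some x := by
        have := List.getLast?_append_of_ne_nil (l₁ := [a]) (l₂ := b :: s) ht
        simpa using hx.symm.trans (by simpa using this) |>.symm
      have h1 : pairSum (a :: b :: s) = pairVal a b + pairSum (b :: s) := rfl
      have h2 : pairSum ((a :: b :: s) ++ v) = pairVal a b + pairSum ((b :: s) ++ v) := rfl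
      rw [h2, ih hx', h1]; ring

lemma head?_eq_of_prefix {u v t : List (Letter k)} (h : t = u ++ v) (hu : u ≠ [])
    {y : Letter k} (ht : t.head? = some y) : u.head? = some y := by
  subst h; rwa [List.head?_append_of_ne_nil _ hu] at ht

lemma getLast?_cons_of_ne_nil {a : Letter k} {u : List (Letter k)} (h : u ≠ []) :
    (a :: u).getLast? = u.getLast? := by
  have := List.getLast?_append_of_ne_nil (l₁ := [a]) h; simpa using this

/-- Key splitting lemma: a word with negative `pairSum` splits at the first edge
reaching level `-1`. -/
lemma hit_neg : ∀ (n : ℕ) (u : List (Letter k)), u.length ≤ n → pairSum u < 0 →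
    ∃ u1 u2 x y, u = u1 ++ u2 ∧ u1.getLast? = some x ∧ u2.head? = some y ∧
      pairSum u1 = 0 ∧ pairVal x y = -1 ∧ pairSum u2 = pairSum u + 1 := by
  intro n
  induction n with
  | zero =>
    intro u hu h
    have : u = [] := List.eq_nil_of_length_eq_zero (Nat.le_zero.mp hu)
    subst this; simp at h
  | succ n ih =>
    intro u hu h
    match u with
    | [] => simp at h
    | [a] => simp at h
    | a :: b :: t =>
      have hcons : pairSum (a :: b :: t) = pairVal a b + pairSum (b :: t) := rfl
      have hlen : (b :: t).length ≤ n := by simpa using hu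
      rcases pairVal_cases a b with hv | hv | hv
      · -- first edge +1 : dig two levels into the tail
        have h1 : pairSum (b :: t) < 0 := by omega
        obtain ⟨w1, w2, x1, y1, heq1, hlast1, hhead1, hsum1, hval1, hsum2⟩ :=
          ih (b :: t) hlen h1
        have hw1ne : w1 ≠ [] := by rintro rfl; simp at hlast1
        have hw2ne : w2 ≠ [] := by rintro rfl; simp at hhead1
        have hlenw2 : w2.length ≤ n := by
          have hl1 := congrArg List.length heq1
          simp only [List.length_cons, List.length_append] at hl1
          have hw1pos : 0 < w1.length := List.length_pos_iff.mpr hw1ne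
          simp only [List.length_cons] at hlen
          omega
        have h2 : pairSum w2 < 0 := by omega
        obtain ⟨z1, z2, x2, y2, heq2, hlast2, hhead2, hsumz1, hval2, hsumz2⟩ :=
          ih w2 hlenw2 h2
        have hz1ne : z1 ≠ [] := by rintro rfl; simp at hlast2
        refine ⟨a :: (w1 ++ z1), z2, x2, y2, ?_, ?_, ?_, ?_, hval2, ?_⟩
        · rw [heq1, heq2]; simp
        · rw [getLast?_cons_of_ne_nil (by simp [hw1ne])]
          rw [List.getLast?_append_of_ne_nil _ hz1ne]; exact hlast2
        · exact hhead2
        · have hheadw1 : w1.head? = some b := head?_eq_of_prefix heq1 hw1ne rfl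
          have hheadz1 : z1.head? = some y1 := head?_eq_of_prefix heq2 hz1ne hhead1
          rw [pairSum_cons a (by rw [List.head?_append_of_ne_nil _ hw1ne]; exact hheadw1)]
          rw [pairSum_append hlast1 hheadz1]
          omega
        · omega
      · -- first edge 0
        have h1 : pairSum (b :: t) < 0 := by omega
        obtain ⟨w1, w2, x1, y1, heq1, hlast1, hhead1, hsum1, hval1, hsum2⟩ :=
          ih (b :: t) hlen h1
        have hw1ne : w1 ≠ [] := by rintro rfl; simp at hlast1
        refine ⟨a :: w1, w2, x1, y1, by rw [heq1]; rfl, ?_, hhead1, ?_, hval1, by omega⟩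
        · rw [getLast?_cons_of_ne_nil hw1ne]; exact hlast1
        · have hheadw1 : w1.head? = some b := head?_eq_of_prefix heq1 hw1ne rfl
          rw [pairSum_cons a hheadw1]; omega
      · -- first edge -1 : split right here
        exact ⟨[a], b :: t, a, b, rfl, rfl, rfl, rfl, hv, by omega⟩

/-- Mirror splitting lemma: a word with positive `pairSum` splits at the first edge
reaching level `+1`. -/
lemma hit_pos : ∀ (n : ℕ) (u : List (Letter k)), u.length ≤ n → 0 < pairSum u →
    ∃ u1 u2 x y, u = u1 ++ u2 ∧ u1.getLast? = some x ∧ u2.head? = some y ∧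
      pairSum u1 = 0 ∧ pairVal x y = 1 ∧ pairSum u2 = pairSum u - 1 := by
  intro n
  induction n with
  | zero =>
    intro u hu h
    have : u = [] := List.eq_nil_of_length_eq_zero (Nat.le_zero.mp hu)
    subst this; simp at h
  | succ n ih =>
    intro u hu h
    match u with
    | [] => simp at h
    | [a] => simp at h
    | a :: b :: t =>
      have hcons : pairSum (a :: b :: t) = pairVal a b + pairSum (b :: t) := rfl
      have hlen : (b :: t).length ≤ n := by simpa using hu
      rcases pairVal_cases a b with hv | hv | hv
      · -- first edge +1 : split right here
        exact ⟨[a], b :: t, a, b, rfl, rfl, rfl, rfl, hv, by omega⟩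
      · -- first edge 0
        have h1 : 0 < pairSum (b :: t) := by omega
        obtain ⟨w1, w2, x1, y1, heq1, hlast1, hhead1, hsum1, hval1, hsum2⟩ :=
          ih (b :: t) hlen h1
        have hw1ne : w1 ≠ [] := by rintro rfl; simp at hlast1
        refine ⟨a :: w1, w2, x1, y1, by rw [heq1]; rfl, ?_, hhead1, ?_, hval1, by omega⟩
        · rw [getLast?_cons_of_ne_nil hw1ne]; exact hlast1
        · have hheadw1 : w1.head? = some b := head?_eq_of_prefix heq1 hw1ne rfl
          rw [pairSum_cons a hheadw1]; omega
      · -- first edge -1 : dig two levels into the tail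
        have h1 : 0 < pairSum (b :: t) := by omega
        obtain ⟨w1, w2, x1, y1, heq1, hlast1, hhead1, hsum1, hval1, hsum2⟩ :=
          ih (b :: t) hlen h1
        have hw1ne : w1 ≠ [] := by rintro rfl; simp at hlast1
        have hw2ne : w2 ≠ [] := by rintro rfl; simp at hhead1
        have hlenw2 : w2.length ≤ n := by
          have hl1 := congrArg List.length heq1
          simp only [List.length_cons, List.length_append] at hl1
          have hw1pos : 0 < w1.length := List.length_pos_iff.mpr hw1ne
          simp only [List.length_cons] at hlen
          omega
        have h2 : 0 < pairSum w2 := by omega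
        obtain ⟨z1, z2, x2, y2, heq2, hlast2, hhead2, hsumz1, hval2, hsumz2⟩ :=
          ih w2 hlenw2 h2
        have hz1ne : z1 ≠ [] := by rintro rfl; simp at hlast2
        refine ⟨a :: (w1 ++ z1), z2, x2, y2, ?_, ?_, ?_, ?_, hval2, ?_⟩
        · rw [heq1, heq2]; simp
        · rw [getLast?_cons_of_ne_nil (by simp [hz1ne])]
          rw [List.getLast?_append_of_ne_nil _ hz1ne]; exact hlast2
        · exact hhead2
        · have hheadw1 : w1.head? = some b := head?_eq_of_prefix heq1 hw1ne rfl
          have hheadz1 : z1.head? = some y1 := head?_eq_of_prefix heq2 hz1ne hhead1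
          rw [pairSum_cons a (by rw [List.head?_append_of_ne_nil _ hw1ne]; exact hheadw1)]
          rw [pairSum_append hlast1 hheadz1]
          omega
        · omega

/-! ### The grammar -/

/-- Nonterminals: a start symbol, `Z a b` generating nonempty reduced zero-`pairSum`
words from `a` to `b`, and `T b` generating positive-chain continuations after `b`. -/
inductive GN (k : ℕ) : Type
  | start : GN k
  | Z : Letter k → Letter k → GN k
  | T : Letter k → GN k
deriving DecidableEq

instance : DecidableEq (ContextFreeRule (Letter k) (GN k)) := fun r s =>
  decidable_of_iff (r.input = s.input ∧ r.output = s.output) (by cases r; cases s; simp)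

/-- Rule descriptors. -/
inductive RD (k : ℕ) : Type
  | sing (a : Letter k)
  | zero (a y b : Letter k)
  | split (a y z y' b : Letter k)
  | one (a b : Letter k)
  | chain (a b : Letter k)
  | tend (b a' b' : Letter k)
  | tcont (b a' b' : Letter k)
deriving DecidableEq, Fintype

/-- The rule associated to a descriptor (invalid descriptors give a harmless default). -/
def toRule : RD k → ContextFreeRule (Letter k) (GN k)
  | .sing a => ⟨.Z a a, [.terminal a]⟩
  | .zero a y b =>
      if pairVal a y = 0 ∧ y ≠ (a.1, !a.2) then
        ⟨.Z a b, [.terminal a, .nonterminal (.Z y b)]⟩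
      else ⟨.Z a a, [.terminal a]⟩
  | .split a y z y' b =>
      if (pairVal a y = 1 ∧ pairVal z y' = -1) ∨ (pairVal a y = -1 ∧ pairVal z y' = 1) then
        ⟨.Z a b, [.terminal a, .nonterminal (.Z y z), .nonterminal (.Z y' b)]⟩
      else ⟨.Z a a, [.terminal a]⟩
  | .one a b =>
      if b.2 = true then ⟨.start, [.nonterminal (.Z a b)]⟩ else ⟨.Z a a, [.terminal a]⟩
  | .chain a b =>
      if b.2 = true then ⟨.start, [.nonterminal (.Z a b), .nonterminal (.T b)]⟩
      else ⟨.Z a a, [.terminal a]⟩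
  | .tend b a' b' =>
      if a'.2 = false ∧ a'.1 < b.1 then ⟨.T b, [.nonterminal (.Z a' b')]⟩
      else ⟨.Z a' a', [.terminal a']⟩
  | .tcont b a' b' =>
      if a'.2 = false ∧ a'.1 < b.1 ∧ b'.2 = true then
        ⟨.T b, [.nonterminal (.Z a' b'), .nonterminal (.T b')]⟩
      else ⟨.Z a' a', [.terminal a']⟩

/-- The grammar. -/
def gram (k : ℕ) : ContextFreeGrammar (Letter k) :=
  ⟨GN k, .start, Finset.univ.image toRule⟩

lemma mem_rules_iff {r : ContextFreeRule (Letter k) (GN k)} :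
    r ∈ (gram k).rules ↔ ∃ d : RD k, toRule d = r := by
  show r ∈ (Finset.univ.image toRule : Finset (ContextFreeRule (Letter k) (GN k))) ↔ _
  simp [Finset.mem_image]

/-- The intended meaning of each nonterminal. -/
def Sat : GN k → List (Letter k) → Prop
  | .Z a b, u => Reduced u ∧ u.head? = some a ∧ u.getLast? = some b ∧ pairSum u = 0
  | .T b, u => Reduced u ∧
      (∃ a', u.head? = some a' ∧ a'.2 = false ∧ a'.1 < b.1) ∧ 0 ≤ pairSum u
  | .start, u => Reduced u ∧ 0 < w u

/-- Meaning of a symbol. -/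
def SatSym : Symbol (Letter k) (GN k) → List (Letter k) → Prop
  | .terminal t, u => u = [t]
  | .nonterminal A, u => Sat A u

/-- Meaning of a sentential form. -/
def SatStr : List (Symbol (Letter k) (GN k)) → List (Letter k) → Prop
  | [], u => u = []
  | s :: σ, u => ∃ u1 u2, u = u1 ++ u2 ∧ SatSym s u1 ∧ SatStr σ u2

lemma satStr_append {σ1 σ2 : List (Symbol (Letter k) (GN k))} {u : List (Letter k)} :
    SatStr (σ1 ++ σ2) u ↔ ∃ u1 u2, u = u1 ++ u2 ∧ SatStr σ1 u1 ∧ SatStr σ2 u2 := by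
  induction σ1 generalizing u with
  | nil =>
    simp only [List.nil_append, SatStr]
    constructor
    · intro h; exact ⟨[], u, rfl, rfl, h⟩
    · rintro ⟨u1, u2, rfl, rfl, h⟩; simpa using h
  | cons s σ ih =>
    simp only [List.cons_append, SatStr]
    constructor
    · rintro ⟨u1, u2, rfl, hs, h2⟩
      obtain ⟨v1, v2, rfl, hv1, hv2⟩ := ih.mp h2
      exact ⟨u1 ++ v1, v2, by simp, ⟨u1, v1, rfl, hs, hv1⟩, hv2⟩
    · rintro ⟨u1, u2, rfl, ⟨v1, v2, rfl, hs, hv⟩, h2⟩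
      exact ⟨v1, v2 ++ u2, by simp, hs, ih.mpr ⟨v2, u2, rfl, hv, h2⟩⟩

lemma satStr_terminal (u : List (Letter k)) : SatStr (u.map Symbol.terminal) u := by
  induction u with
  | nil => rfl
  | cons a t ih => exact ⟨[a], t, rfl, rfl, ih⟩

/-! ### Soundness -/

lemma reduced_cons {a : Letter k} {u : List (Letter k)} (hu : Reduced u)
    (h : ∀ y ∈ u.head?, y ≠ (a.1, !a.2)) : Reduced (a :: u) :=
  List.isChain_cons.mpr ⟨h, hu⟩

lemma reduced_append {u v : List (Letter k)} (hu : Reduced u) (hv : Reduced v)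
    (h : ∀ x ∈ u.getLast?, ∀ y ∈ v.head?, y ≠ (x.1, !x.2)) : Reduced (u ++ v) :=
  List.isChain_append.mpr ⟨hu, hv, h⟩

lemma lastSign_eq {u : List (Letter k)} {b : Letter k} (h : u.getLast? = some b) :
    lastSign u = if b.2 then 1/2 else -1/2 := by
  simp only [lastSign, h]

lemma lastSign_bound (u : List (Letter k)) : -(1/2 : ℚ) ≤ lastSign u ∧ lastSign u ≤ 1/2 := by
  rcases h : u.getLast? with _ | x
  · simp [lastSign, h]
  · rw [lastSign_eq h]; split <;> norm_num

lemma sat_sing (a : Letter k) : Sat (GN.Z a a) [a] :=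
  ⟨List.isChain_singleton a, rfl, rfl, rfl⟩

lemma ne_nil_of_head? {u : List (Letter k)} {a : Letter k} (h : u.head? = some a) : u ≠ [] := by
  rintro rfl; simp at h

lemma junction_ok {x y : Letter k} (h : pairVal x y ≠ 0) :
    ∀ a ∈ some x, ∀ b ∈ some y, b ≠ (a.1, !a.2) := by
  simp only [Option.mem_def, Option.some.injEq]
  rintro a rfl b rfl
  exact ne_flip_of_pairVal_ne_zero h

lemma rule_sound (d : RD k) (u : List (Letter k))
    (h : SatStr (toRule d).output u) : Sat (toRule d).input u := by
  cases d with
  | sing a =>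
    obtain ⟨u1, u2, rfl, rfl, rfl⟩ := h
    exact sat_sing a
  | zero a y b =>
    by_cases hc : pairVal a y = 0 ∧ y ≠ (a.1, !a.2)
    · rw [toRule, if_pos hc] at h ⊢
      obtain ⟨u1, u2, rfl, rfl, v1, v2, rfl, hsat, rfl⟩ := h
      obtain ⟨hred, hhead, hlast, hsum⟩ := hsat
      have hne : v1 ≠ [] := ne_nil_of_head? hhead
      refine ⟨?_, ?_, ?_, ?_⟩
      · simp only [List.singleton_append, List.append_nil]
        refine reduced_cons hred ?_
        rw [hhead]
        simp only [Option.mem_def, Option.some.injEq]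
        rintro b rfl
        exact hc.2
      · simp
      · simp only [List.singleton_append, List.append_nil]
        rw [getLast?_cons_of_ne_nil hne]; exact hlast
      · simp only [List.singleton_append, List.append_nil]
        rw [pairSum_cons a hhead, hc.1, hsum]; ring
    · rw [toRule, if_neg hc] at h ⊢
      obtain ⟨u1, u2, rfl, rfl, rfl⟩ := h
      simpa using sat_sing a
  | split a y z y' b =>
    by_cases hc : (pairVal a y = 1 ∧ pairVal z y' = -1) ∨
        (pairVal a y = -1 ∧ pairVal z y' = 1)
    · rw [toRule, if_pos hc] at h ⊢
      obtain ⟨u1, u2, rfl, rfl, v1, v2, rfl, hsat1, w1, w2, rfl, hsat2, rfl⟩ := h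
      obtain ⟨hred1, hhead1, hlast1, hsum1⟩ := hsat1
      obtain ⟨hred2, hhead2, hlast2, hsum2⟩ := hsat2
      have hne1 : v1 ≠ [] := ne_nil_of_head? hhead1
      have hne2 : w1 ≠ [] := ne_nil_of_head? hhead2
      have hay : pairVal a y ≠ 0 := by rcases hc with ⟨h1, _⟩ | ⟨h1, _⟩ <;> omega
      have hzy : pairVal z y' ≠ 0 := by rcases hc with ⟨_, h1⟩ | ⟨_, h1⟩ <;> omega
      have hsum : pairVal a y + pairVal z y' = 0 := by
        rcases hc with ⟨h1, h2⟩ | ⟨h1, h2⟩ <;> omega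
      have hredvw : Reduced (v1 ++ w1) := by
        refine reduced_append hred1 hred2 ?_
        rw [hlast1, hhead2]
        exact junction_ok hzy
      have hheadvw : (v1 ++ w1).head? = some y := by
        rw [List.head?_append_of_ne_nil _ hne1]; exact hhead1
      refine ⟨?_, ?_, ?_, ?_⟩
      · simp only [List.singleton_append, List.append_nil]
        refine reduced_cons hredvw ?_
        rw [hheadvw]
        simp only [Option.mem_def, Option.some.injEq]
        rintro b rfl
        exact ne_flip_of_pairVal_ne_zero hay
      · simp
      · simp only [List.singleton_append, List.append_nil]
        rw [getLast?_cons_of_ne_nil (by simp [hne2]),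
          List.getLast?_append_of_ne_nil _ hne2]
        exact hlast2
      · simp only [List.singleton_append, List.append_nil]
        rw [pairSum_cons a hheadvw, pairSum_append hlast1 hhead2, hsum1, hsum2]
        omega
    · rw [toRule, if_neg hc] at h ⊢
      obtain ⟨u1, u2, rfl, rfl, rfl⟩ := h
      simpa using sat_sing a
  | one a b =>
    by_cases hc : b.2 = true
    · rw [toRule, if_pos hc] at h ⊢
      obtain ⟨u1, u2, rfl, hsat, rfl⟩ := h
      obtain ⟨hred, hhead, hlast, hsum⟩ := hsat
      rw [List.append_nil]
      refine ⟨hred, ?_⟩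
      rw [w, hsum, lastSign_eq hlast, if_pos hc]
      norm_num
    · rw [toRule, if_neg hc] at h ⊢
      obtain ⟨u1, u2, rfl, rfl, rfl⟩ := h
      simpa using sat_sing a
  | chain a b =>
    by_cases hc : b.2 = true
    · rw [toRule, if_pos hc] at h ⊢
      obtain ⟨u1, u2, rfl, hsat1, w1, w2, rfl, hsat2, rfl⟩ := h
      obtain ⟨hred1, hhead1, hlast1, hsum1⟩ := hsat1
      obtain ⟨hred2, ⟨a', hhead2, ha'2, ha'1⟩, hsum2⟩ := hsat2
      have hne1 : u1 ≠ [] := ne_nil_of_head? hhead1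
      have hne2 : w1 ≠ [] := ne_nil_of_head? hhead2
      have hval : pairVal b a' = 1 := pairVal_eq_one_iff.mpr ⟨hc, ha'2, ha'1⟩
      rw [List.append_nil]
      constructor
      · refine reduced_append hred1 hred2 ?_
        rw [hlast1, hhead2]
        exact junction_ok (by omega)
      · have hps : pairSum (u1 ++ w1) = 1 + pairSum w1 := by
          rw [pairSum_append hlast1 hhead2, hsum1, hval]; ring
        have hls := (lastSign_bound (u1 ++ w1)).1
        have h1 : (1 : ℚ) ≤ (pairSum (u1 ++ w1) : ℚ) := by
          have : (1 : ℤ) ≤ pairSum (u1 ++ w1) := by omega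
          exact_mod_cast this
        rw [w]; linarith
    · rw [toRule, if_neg hc] at h ⊢
      obtain ⟨u1, u2, rfl, rfl, rfl⟩ := h
      simpa using sat_sing a
  | tend b a' b' =>
    by_cases hc : a'.2 = false ∧ a'.1 < b.1
    · rw [toRule, if_pos hc] at h ⊢
      obtain ⟨u1, u2, rfl, hsat, rfl⟩ := h
      obtain ⟨hred, hhead, hlast, hsum⟩ := hsat
      rw [List.append_nil]
      exact ⟨hred, ⟨a', hhead, hc.1, hc.2⟩, by omega⟩
    · rw [toRule, if_neg hc] at h ⊢
      obtain ⟨u1, u2, rfl, rfl, rfl⟩ := h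
      simpa using sat_sing a'
  | tcont b a' b' =>
    by_cases hc : a'.2 = false ∧ a'.1 < b.1 ∧ b'.2 = true
    · rw [toRule, if_pos hc] at h ⊢
      obtain ⟨u1, u2, rfl, hsat1, w1, w2, rfl, hsat2, rfl⟩ := h
      obtain ⟨hred1, hhead1, hlast1, hsum1⟩ := hsat1
      obtain ⟨hred2, ⟨a'', hhead2, ha'2, ha'1⟩, hsum2⟩ := hsat2
      have hne1 : u1 ≠ [] := ne_nil_of_head? hhead1
      have hval : pairVal b' a'' = 1 := pairVal_eq_one_iff.mpr ⟨hc.2.2, ha'2, ha'1⟩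
      rw [List.append_nil]
      refine ⟨?_, ?_, ?_⟩
      · refine reduced_append hred1 hred2 ?_
        rw [hlast1, hhead2]
        exact junction_ok (by omega)
      · exact ⟨a', by rw [List.head?_append_of_ne_nil _ hne1]; exact hhead1, hc.1, hc.2.1⟩
      · rw [pairSum_append hlast1 hhead2, hsum1, hval]; omega
    · rw [toRule, if_neg hc] at h ⊢
      obtain ⟨u1, u2, rfl, rfl, rfl⟩ := h
      simpa using sat_sing a'

lemma derives_sound {wd : List (Letter k)} {σ : List (Symbol (Letter k) (GN k))}
    (h : (gram k).Derives σ (wd.map Symbol.terminal)) : SatStr σ wd := by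
  induction h using Relation.ReflTransGen.head_induction_on with
  | refl => exact satStr_terminal wd
  | head hp _ ih =>
    obtain ⟨r, hr, hrw⟩ := hp
    obtain ⟨p, q, rfl, rfl⟩ := hrw.exists_parts
    obtain ⟨u1, u4, rfl, h14, hq⟩ := satStr_append.mp ih
    obtain ⟨up, uo, rfl, hsp, hso⟩ := satStr_append.mp h14
    obtain ⟨d, rfl⟩ := mem_rules_iff.mp hr
    have hmid : Sat (toRule d).input uo := rule_sound d uo hso
    exact satStr_append.mpr ⟨up ++ uo, u4, rfl,
      satStr_append.mpr ⟨up, uo, rfl, hsp, ⟨uo, [], by simp, hmid, rfl⟩⟩, hq⟩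

lemma lang_subset {wd : List (Letter k)} (h : wd ∈ (gram k).language) :
    Reduced wd ∧ 0 < w wd := by
  rw [ContextFreeGrammar.mem_language_iff] at h
  have := derives_sound h
  obtain ⟨u1, u2, heq, hsat, hnil⟩ := this
  have hnil' : u2 = [] := hnil
  subst hnil'
  rw [List.append_nil] at heq
  subst heq
  exact hsat

/-! ### Completeness -/

lemma derives_of {A : GN k} {out : List (Symbol (Letter k) (GN k))} (d : RD k)
    (hd : toRule d = ⟨A, out⟩) : (gram k).Derives [Symbol.nonterminal A] out := by
  refine ContextFreeGrammar.Produces.single ⟨toRule d, mem_rules_iff.mpr ⟨d, rfl⟩, ?_⟩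
  rw [hd]
  exact ContextFreeRule.Rewrites.input_output

lemma Z_complete : ∀ (n : ℕ) (u : List (Letter k)) (a b : Letter k), u.length ≤ n →
    Reduced u → u.head? = some a → u.getLast? = some b → pairSum u = 0 →
    (gram k).Derives [Symbol.nonterminal (GN.Z a b)] (u.map Symbol.terminal) := by
  intro n
  induction n with
  | zero =>
    intro u a b hu _ hh _ _
    have : u = [] := List.eq_nil_of_length_eq_zero (Nat.le_zero.mp hu)
    subst this; simp at hh
  | succ n ih =>
    intro u a b hu hred hh hl hs
    match u with
    | [] => simp at hh
    | [x] =>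
      simp only [List.head?_cons, Option.some.injEq] at hh
      simp only [List.getLast?_singleton, Option.some.injEq] at hl
      replace hh := hh.symm; subst hh
      subst hl
      exact derives_of (.sing a) rfl
    | x :: y :: t =>
      simp only [List.head?_cons, Option.some.injEq] at hh
      replace hh := hh.symm
      subst hh
      have hlen : (y :: t).length ≤ n := by simpa using hu
      have hltail : (y :: t).getLast? = some b := by
        rw [getLast?_cons_of_ne_nil (by simp)] at hl; exact hl
      have hredtail : Reduced (y :: t) := (List.isChain_cons.mp hred).2
      have hflip : y ≠ (a.1, !a.2) := by
        have := (List.isChain_cons.mp hred).1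
        exact this y rfl
      have hcons : pairSum (a :: y :: t) = pairVal a y + pairSum (y :: t) := rfl
      rcases pairVal_cases a y with hv | hv | hv
      · -- first edge +1, use hit_neg on the tail
        have hneg : pairSum (y :: t) < 0 := by omega
        obtain ⟨u1, u2, x1, y1, heq, hlast1, hhead2, hsum1, hval, hsum2⟩ :=
          hit_neg n (y :: t) hlen hneg
        have hne1 : u1 ≠ [] := by rintro rfl; simp at hlast1
        have hne2 : u2 ≠ [] := by rintro rfl; simp at hhead2
        have hred1 : Reduced u1 := by
          rw [heq] at hredtail; exact (List.isChain_append.mp hredtail).1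
        have hred2 : Reduced u2 := by
          rw [heq] at hredtail; exact (List.isChain_append.mp hredtail).2.1
        have hhead1 : u1.head? = some y := head?_eq_of_prefix heq hne1 rfl
        have hlast2 : u2.getLast? = some b := by
          rw [heq, List.getLast?_append_of_ne_nil _ hne2] at hltail; exact hltail
        have hleq : t.length + 1 = u1.length + u2.length := by
          have h' := congrArg List.length heq
          simpa [List.length_append] using h'
        have hpos1 := List.length_pos_iff.mpr hne1
        have hpos2 := List.length_pos_iff.mpr hne2
        have hlen' : t.length + 1 ≤ n := by simpa using hlen
        have hlen1 : u1.length ≤ n := by omega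
        have hlen2 : u2.length ≤ n := by omega
        have hd0 : (gram k).Derives [Symbol.nonterminal (GN.Z a b)]
            [Symbol.terminal a, Symbol.nonterminal (GN.Z y x1),
              Symbol.nonterminal (GN.Z y1 b)] :=
          derives_of (.split a y x1 y1 b) (by rw [toRule, if_pos (Or.inl ⟨hv, hval⟩)]; rfl)
        have hd1 := ih u1 y x1 hlen1 hred1 hhead1 hlast1 (by omega)
        have hd2 := ih u2 y1 b hlen2 hred2 hhead2 hlast2 (by omega)
        have hstep1 : (gram k).Derives
            [Symbol.terminal a, Symbol.nonterminal (GN.Z y x1),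
              Symbol.nonterminal (GN.Z y1 b)]
            ([Symbol.terminal a] ++ u1.map Symbol.terminal ++
              [Symbol.nonterminal (GN.Z y1 b)]) := by
          have := (hd1.append_left [Symbol.terminal a]).append_right
            [Symbol.nonterminal (GN.Z y1 b)]
          simp at this ⊢; exact this
        have hstep2 : (gram k).Derives
            ([Symbol.terminal a] ++ u1.map Symbol.terminal ++
              [Symbol.nonterminal (GN.Z y1 b)])
            ([Symbol.terminal a] ++ u1.map Symbol.terminal ++ u2.map Symbol.terminal) :=
          hd2.append_left _
        have := (hd0.trans hstep1).trans hstep2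
        have hfin : ((a :: y :: t).map (Symbol.terminal : Letter k → Symbol (Letter k) (GN k)))
            = [Symbol.terminal a] ++ u1.map Symbol.terminal ++ u2.map Symbol.terminal := by
          rw [show (a :: y :: t) = [a] ++ (u1 ++ u2) by rw [← heq]; rfl]
          simp
        erw [hfin]; exact this
      · -- first edge 0
        have hd0 : (gram k).Derives [Symbol.nonterminal (GN.Z a b)]
            [Symbol.terminal a, Symbol.nonterminal (GN.Z y b)] :=
          derives_of (.zero a y b) (by rw [toRule, if_pos ⟨hv, hflip⟩]; rfl)
        have hd1 := ih (y :: t) y b hlen hredtail rfl hltail (by omega)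
        have := hd0.trans (by simpa using hd1.append_left [Symbol.terminal a])
        simpa using this
      · -- first edge -1, use hit_pos on the tail
        have hpos : 0 < pairSum (y :: t) := by omega
        obtain ⟨u1, u2, x1, y1, heq, hlast1, hhead2, hsum1, hval, hsum2⟩ :=
          hit_pos n (y :: t) hlen hpos
        have hne1 : u1 ≠ [] := by rintro rfl; simp at hlast1
        have hne2 : u2 ≠ [] := by rintro rfl; simp at hhead2
        have hred1 : Reduced u1 := by
          rw [heq] at hredtail; exact (List.isChain_append.mp hredtail).1
        have hred2 : Reduced u2 := by
          rw [heq] at hredtail; exact (List.isChain_append.mp hredtail).2.1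
        have hhead1 : u1.head? = some y := head?_eq_of_prefix heq hne1 rfl
        have hlast2 : u2.getLast? = some b := by
          rw [heq, List.getLast?_append_of_ne_nil _ hne2] at hltail; exact hltail
        have hleq : t.length + 1 = u1.length + u2.length := by
          have h' := congrArg List.length heq
          simpa [List.length_append] using h'
        have hpos1 := List.length_pos_iff.mpr hne1
        have hpos2 := List.length_pos_iff.mpr hne2
        have hlen' : t.length + 1 ≤ n := by simpa using hlen
        have hlen1 : u1.length ≤ n := by omega
        have hlen2 : u2.length ≤ n := by omega
        have hd0 : (gram k).Derives [Symbol.nonterminal (GN.Z a b)]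
            [Symbol.terminal a, Symbol.nonterminal (GN.Z y x1),
              Symbol.nonterminal (GN.Z y1 b)] :=
          derives_of (.split a y x1 y1 b) (by rw [toRule, if_pos (Or.inr ⟨hv, hval⟩)]; rfl)
        have hd1 := ih u1 y x1 hlen1 hred1 hhead1 hlast1 (by omega)
        have hd2 := ih u2 y1 b hlen2 hred2 hhead2 hlast2 (by omega)
        have hstep1 : (gram k).Derives
            [Symbol.terminal a, Symbol.nonterminal (GN.Z y x1),
              Symbol.nonterminal (GN.Z y1 b)]
            ([Symbol.terminal a] ++ u1.map Symbol.terminal ++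
              [Symbol.nonterminal (GN.Z y1 b)]) := by
          have := (hd1.append_left [Symbol.terminal a]).append_right
            [Symbol.nonterminal (GN.Z y1 b)]
          simp at this ⊢; exact this
        have hstep2 : (gram k).Derives
            ([Symbol.terminal a] ++ u1.map Symbol.terminal ++
              [Symbol.nonterminal (GN.Z y1 b)])
            ([Symbol.terminal a] ++ u1.map Symbol.terminal ++ u2.map Symbol.terminal) :=
          hd2.append_left _
        have := (hd0.trans hstep1).trans hstep2
        have hfin : ((a :: y :: t).map (Symbol.terminal : Letter k → Symbol (Letter k) (GN k)))
            = [Symbol.terminal a] ++ u1.map Symbol.terminal ++ u2.map Symbol.terminal := by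
          rw [show (a :: y :: t) = [a] ++ (u1 ++ u2) by rw [← heq]; rfl]
          simp
        erw [hfin]; exact this

lemma exists_getLast? {u : List (Letter k)} (h : u ≠ []) : ∃ b, u.getLast? = some b := by
  cases u with
  | nil => exact absurd rfl h
  | cons a t => exact ⟨(a :: t).getLast (by simp), List.getLast?_eq_getLast _⟩

lemma T_complete : ∀ (n : ℕ) (u : List (Letter k)) (b a' : Letter k), u.length ≤ n →
    Reduced u → u.head? = some a' → a'.2 = false → a'.1 < b.1 → 0 ≤ pairSum u →
    (gram k).Derives [Symbol.nonterminal (GN.T b)] (u.map Symbol.terminal) := by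
  intro n
  induction n with
  | zero =>
    intro u b a' hu _ hh _ _ _
    have : u = [] := List.eq_nil_of_length_eq_zero (Nat.le_zero.mp hu)
    subst this; simp at hh
  | succ n ih =>
    intro u b a' hu hred hh ha'2 ha'1 hps
    have hne : u ≠ [] := ne_nil_of_head? hh
    rcases eq_or_lt_of_le hps with hz | hpos
    · -- pairSum u = 0 : final piece
      obtain ⟨b', hb'⟩ := exists_getLast? hne
      have hd0 : (gram k).Derives [Symbol.nonterminal (GN.T b)]
          [Symbol.nonterminal (GN.Z a' b')] :=
        derives_of (.tend b a' b') (by rw [toRule, if_pos ⟨ha'2, ha'1⟩]; rfl)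
      have hd1 := Z_complete u.length u a' b' le_rfl hred hh hb' hz.symm
      simpa using hd0.trans (by simpa using hd1)
    · -- pairSum u > 0 : split off a zero piece at the first +1 edge
      obtain ⟨u1, u2, x1, y1, heq, hlast1, hhead2, hsum1, hval, hsum2⟩ :=
        hit_pos u.length u le_rfl hpos
      have hne1 : u1 ≠ [] := by rintro rfl; simp at hlast1
      have hne2 : u2 ≠ [] := by rintro rfl; simp at hhead2
      have hred1 : Reduced u1 := by
        rw [heq] at hred; exact (List.isChain_append.mp hred).1
      have hred2 : Reduced u2 := by
        rw [heq] at hred; exact (List.isChain_append.mp hred).2.1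
      have hhead1 : u1.head? = some a' := head?_eq_of_prefix heq hne1 hh
      obtain ⟨hx1, hy1f, hy1lt⟩ := pairVal_eq_one_iff.mp hval
      have hlen2 : u2.length ≤ n := by
        have h' := congrArg List.length heq
        simp only [List.length_append] at h'
        have := List.length_pos_iff.mpr hne1
        omega
      have hd0 : (gram k).Derives [Symbol.nonterminal (GN.T b)]
          [Symbol.nonterminal (GN.Z a' x1), Symbol.nonterminal (GN.T x1)] :=
        derives_of (.tcont b a' x1) (by rw [toRule, if_pos ⟨ha'2, ha'1, hx1⟩]; rfl)
      have hd1 := Z_complete u1.length u1 a' x1 le_rfl hred1 hhead1 hlast1 hsum1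
      have hd2 := ih u2 x1 y1 hlen2 hred2 hhead2 hy1f hy1lt (by omega)
      have hstep1 : (gram k).Derives
          [Symbol.nonterminal (GN.Z a' x1), Symbol.nonterminal (GN.T x1)]
          (u1.map Symbol.terminal ++ [Symbol.nonterminal (GN.T x1)]) := by
        have := hd1.append_right [Symbol.nonterminal (GN.T x1)]
        simp at this; exact this
      have hstep2 : (gram k).Derives
          (u1.map Symbol.terminal ++ [Symbol.nonterminal (GN.T x1)])
          (u1.map Symbol.terminal ++ u2.map Symbol.terminal) :=
        hd2.append_left _
      have hfin : (u.map (Symbol.terminal : Letter k → Symbol (Letter k) (GN k)))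
          = u1.map Symbol.terminal ++ u2.map Symbol.terminal := by
        rw [heq]; simp
      erw [hfin]
      exact (hd0.trans hstep1).trans hstep2

lemma start_complete {u : List (Letter k)} (hred : Reduced u) (hw : 0 < w u) :
    (gram k).Derives [Symbol.nonterminal (GN.start)] (u.map Symbol.terminal) := by
  have hne : u ≠ [] := by
    rintro rfl
    rw [w] at hw
    simp [lastSign] at hw
  obtain ⟨b, hb⟩ := exists_getLast? hne
  obtain ⟨a, ha⟩ : ∃ a, u.head? = some a := by
    cases u with
    | nil => exact absurd rfl hne
    | cons x t => exact ⟨x, rfl⟩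
  have hls := lastSign_bound u
  have hps : 0 ≤ pairSum u := by
    by_contra hcon
    push_neg at hcon
    have h1 : pairSum u ≤ -1 := by omega
    have h1' : (pairSum u : ℚ) ≤ -1 := by exact_mod_cast h1
    rw [w] at hw
    linarith [hls.2]
  rcases eq_or_lt_of_le hps with hz | hpos
  · -- pairSum u = 0, so the last letter must be positive
    have hbpos : b.2 = true := by
      by_contra hcon
      rw [w, ← hz, lastSign_eq hb, if_neg hcon] at hw
      norm_num at hw
    have hd0 : (gram k).Derives [Symbol.nonterminal (GN.start)]
        [Symbol.nonterminal (GN.Z a b)] :=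
      derives_of (.one a b) (by rw [toRule, if_pos hbpos]; rfl)
    have hd1 := Z_complete u.length u a b le_rfl hred ha hb hz.symm
    simpa using hd0.trans (by simpa using hd1)
  · -- pairSum u ≥ 1 : split at the first +1 edge
    obtain ⟨u1, u2, x1, y1, heq, hlast1, hhead2, hsum1, hval, hsum2⟩ :=
      hit_pos u.length u le_rfl hpos
    have hne1 : u1 ≠ [] := by rintro rfl; simp at hlast1
    have hne2 : u2 ≠ [] := by rintro rfl; simp at hhead2
    have hred1 : Reduced u1 := by
      rw [heq] at hred; exact (List.isChain_append.mp hred).1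
    have hred2 : Reduced u2 := by
      rw [heq] at hred; exact (List.isChain_append.mp hred).2.1
    have hhead1 : u1.head? = some a := head?_eq_of_prefix heq hne1 ha
    obtain ⟨hx1, hy1f, hy1lt⟩ := pairVal_eq_one_iff.mp hval
    have hd0 : (gram k).Derives [Symbol.nonterminal (GN.start)]
        [Symbol.nonterminal (GN.Z a x1), Symbol.nonterminal (GN.T x1)] :=
      derives_of (.chain a x1) (by rw [toRule, if_pos hx1]; rfl)
    have hd1 := Z_complete u1.length u1 a x1 le_rfl hred1 hhead1 hlast1 hsum1
    have hd2 := T_complete u2.length u2 x1 y1 le_rfl hred2 hhead2 hy1f hy1lt (by omega)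
    have hstep1 : (gram k).Derives
        [Symbol.nonterminal (GN.Z a x1), Symbol.nonterminal (GN.T x1)]
        (u1.map Symbol.terminal ++ [Symbol.nonterminal (GN.T x1)]) := by
      have := hd1.append_right [Symbol.nonterminal (GN.T x1)]
      simp at this; exact this
    have hstep2 : (gram k).Derives
        (u1.map Symbol.terminal ++ [Symbol.nonterminal (GN.T x1)])
        (u1.map Symbol.terminal ++ u2.map Symbol.terminal) :=
      hd2.append_left _
    have hfin : (u.map (Symbol.terminal : Letter k → Symbol (Letter k) (GN k)))
        = u1.map Symbol.terminal ++ u2.map Symbol.terminal := by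
      rw [heq]; simp
    erw [hfin]
    exact (hd0.trans hstep1).trans hstep2

lemma lang_eq : (gram k).language = { u | Reduced u ∧ 0 < w u } := by
  ext u
  constructor
  · exact lang_subset
  · rintro ⟨hred, hw⟩
    rw [ContextFreeGrammar.mem_language_iff]
    exact start_complete hred hw

end CFproof


/-- the positive cone `P_k`, the set of all reduced words `u` over
`Σ_k^±` with `w u > 0`, is a context-free language. -/
theorem stmt14 (k : ℕ) (hk : 2 ≤ k) :
    Language.IsContextFree
      ({u | Reduced u ∧ 0 < w u} : Language (Letter k)) :=
  ⟨CFproof.gram k, CFproof.lang_eq⟩
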